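/- arXiv:1504.03407 — 2 statements merged into one kernel-verified Lean document; each statement's English description precedes it below -/
import Mathlib

section
/- Let q : ℝ×ℝ → ℂ be twice continuously differentiable. Then the zero-curvature equation ∂ₜP(x,t,k) − ∂ₓR(x,t,k) + P(x,t,k)·R(x,t,k) − R(x,t,k)·P(x,t,k) = 0 holds for all (x,t) ∈ ℝ² and all k ∈ ℂ if and only if q satisfies the Gerdjikov–Ivanov equation on ℝ²; that is, the GI equation admits the Lax representation ψₓ = P ψ, ψₜ = R ψ. -/
set_option maxRecDepth 4000


open Matrix Complex ComplexConjugate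

noncomputable section

abbrev M2 := Matrix (Fin 2) (Fin 2) ℂ

def sigma3 : M2 := !![1, 0; 0, -1]

/-- Partial derivative in the first (space) variable. -/
def pdx (f : ℝ × ℝ → ℂ) (p : ℝ × ℝ) : ℂ := deriv (fun x => f (x, p.2)) p.1

/-- Partial derivative in the second (time) variable. -/
def pdt (f : ℝ × ℝ → ℂ) (p : ℝ × ℝ) : ℂ := deriv (fun t => f (p.1, t)) p.2

/-- Entrywise partial derivative in x of a matrix-valued function. -/
def mpdx (F : ℝ × ℝ → M2) (p : ℝ × ℝ) : M2 := Matrix.of fun i j => pdx (fun r => F r i j) p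

/-- Entrywise partial derivative in t of a matrix-valued function. -/
def mpdt (F : ℝ × ℝ → M2) (p : ℝ × ℝ) : M2 := Matrix.of fun i j => pdt (fun r => F r i j) p

def Qm (q : ℝ × ℝ → ℂ) (p : ℝ × ℝ) : M2 := !![0, q p; -conj (q p), 0]

def Um (q : ℝ × ℝ → ℂ) (p : ℝ × ℝ) (k : ℂ) : M2 :=
  k • Qm q p - (Complex.I / 2) • (Qm q p ^ 2 * sigma3)

def Vm (q : ℝ × ℝ → ℂ) (p : ℝ × ℝ) (k : ℂ) : M2 :=
  (2 * k ^ 3) • Qm q p - (Complex.I * k ^ 2) • (Qm q p ^ 2 * sigma3)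
    - (Complex.I * k) • (mpdx (Qm q) p * sigma3)
    + (1 / 2 : ℂ) • (mpdx (Qm q) p * Qm q p - Qm q p * mpdx (Qm q) p)
    + (Complex.I / 4) • (Qm q p ^ 4 * sigma3)

def Pm (q : ℝ × ℝ → ℂ) (p : ℝ × ℝ) (k : ℂ) : M2 :=
  (-Complex.I * k ^ 2) • sigma3 + Um q p k

def Rm (q : ℝ × ℝ → ℂ) (p : ℝ × ℝ) (k : ℂ) : M2 :=
  (-(2 * Complex.I) * k ^ 4) • sigma3 + Vm q p k

lemma pdx_conj (f : ℝ × ℝ → ℂ) (p : ℝ × ℝ) :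
    pdx (fun r => conj (f r)) p = conj (pdx f p) := by
  simp only [pdx, starRingEnd_apply]; exact deriv.star

lemma Qm_sq (q : ℝ × ℝ → ℂ) (r : ℝ × ℝ) :
    Qm q r ^ 2 = (-(q r * conj (q r))) • (1 : M2) := by
  rw [sq]; ext i j
  fin_cases i <;> fin_cases j <;>
    simp [Qm, Matrix.mul_apply, Fin.sum_univ_two, Matrix.one_apply] <;> ring

lemma Qm_four (q : ℝ × ℝ → ℂ) (r : ℝ × ℝ) :
    Qm q r ^ 4 = ((q r * conj (q r)) ^ 2) • (1 : M2) := by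
  have h4 : (4:ℕ) = 2 * 2 := rfl
  rw [h4, pow_mul, Qm_sq, smul_pow, one_pow]; congr 1; ring

lemma mpdx_Qm (q : ℝ × ℝ → ℂ) (r : ℝ × ℝ) :
    mpdx (Qm q) r = !![0, pdx q r; -conj (pdx q r), 0] := by
  ext i j
  fin_cases i <;> fin_cases j
  · show pdx (fun s => Qm q s 0 0) r = 0
    simp [Qm, pdx]
  · show pdx (fun s => Qm q s 0 1) r = pdx q r
    simp [Qm]
  · show pdx (fun s => Qm q s 1 0) r = -conj (pdx q r)
    have : (fun s => Qm q s 1 0) = fun s => -(conj (q s)) := by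
      funext s; simp [Qm]
    rw [this]
    simp only [pdx, starRingEnd_apply]
    rw [deriv.fun_neg, deriv.star]
  · show pdx (fun s => Qm q s 1 1) r = 0
    simp [Qm, pdx]

lemma Pm_eq (q : ℝ × ℝ → ℂ) (r : ℝ × ℝ) (k : ℂ) :
    Pm q r k = !![-Complex.I * k ^ 2 + (Complex.I / 2) * (q r * conj (q r)), k * q r;
                  -(k * conj (q r)), Complex.I * k ^ 2 - (Complex.I / 2) * (q r * conj (q r))] := by
  rw [Pm, Um, Qm_sq]
  ext i j
  fin_cases i <;> fin_cases j <;>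
    simp [Qm, sigma3, Matrix.mul_apply, Fin.sum_univ_two, Matrix.one_apply] <;> ring

lemma Rm_eq (q : ℝ × ℝ → ℂ) (r : ℝ × ℝ) (k : ℂ) :
    Rm q r k = !![-(2 * Complex.I) * k ^ 4 + Complex.I * k ^ 2 * (q r * conj (q r))
                    + (1/2 : ℂ) * (q r * conj (pdx q r) - conj (q r) * pdx q r)
                    + (Complex.I / 4) * ((q r * conj (q r)) * (q r * conj (q r))),
                  2 * k ^ 3 * q r + Complex.I * k * pdx q r;
                  -(2 * k ^ 3 * conj (q r)) + Complex.I * k * conj (pdx q r),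
                  -(-(2 * Complex.I) * k ^ 4 + Complex.I * k ^ 2 * (q r * conj (q r))
                    + (1/2 : ℂ) * (q r * conj (pdx q r) - conj (q r) * pdx q r)
                    + (Complex.I / 4) * ((q r * conj (q r)) * (q r * conj (q r))))] := by
  rw [Rm, Vm, Qm_sq, Qm_four, mpdx_Qm]
  ext i j
  fin_cases i <;> fin_cases j <;>
    simp [Qm, sigma3, Matrix.mul_apply, Fin.sum_univ_two, Matrix.one_apply] <;> ring

lemma mpdt_Pm {q : ℝ × ℝ → ℂ} (hq : ContDiff ℝ 2 q) (p : ℝ × ℝ) (k : ℂ) :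
    mpdt (fun r => Pm q r k) p =
      !![(Complex.I/2) * (pdt q p * conj (q p) + q p * conj (pdt q p)), k * pdt q p;
         -(k * conj (pdt q p)),
         -((Complex.I/2) * (pdt q p * conj (q p) + q p * conj (pdt q p)))] := by
  have hft : DifferentiableAt ℝ (fun t => q (p.1, t)) p.2 :=
    ((hq.comp (contDiff_const.prodMk contDiff_id)).differentiable two_ne_zero).differentiableAt
  have Hft : HasDerivAt (fun t => q (p.1, t)) (deriv (fun t => q (p.1, t)) p.2) p.2 :=
    hft.hasDerivAt
  have e : (fun r => Pm q r k) = fun r =>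
      !![-Complex.I * k ^ 2 + (Complex.I / 2) * (q r * conj (q r)), k * q r;
         -(k * conj (q r)), Complex.I * k ^ 2 - (Complex.I / 2) * (q r * conj (q r))] :=
    funext fun r => Pm_eq q r k
  have h00 : pdt (fun r => -Complex.I * k ^ 2 + (Complex.I / 2) * (q r * conj (q r))) p
      = (Complex.I/2) * (pdt q p * conj (q p) + q p * conj (pdt q p)) := by
    simp only [pdt, starRingEnd_apply]
    exact ((((Hft.mul Hft.star)).const_mul (Complex.I/2)).const_add
      (-Complex.I * k^2)).deriv.trans (by ring)
  have h01 : pdt (fun r => k * q r) p = k * pdt q p := by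
    simp only [pdt]
    exact (Hft.const_mul k).deriv
  have h10 : pdt (fun r => -(k * conj (q r))) p = -(k * conj (pdt q p)) := by
    simp only [pdt, starRingEnd_apply]
    exact ((Hft.star.const_mul k).neg).deriv
  have h11 : pdt (fun r => Complex.I * k ^ 2 - (Complex.I / 2) * (q r * conj (q r))) p
      = -((Complex.I/2) * (pdt q p * conj (q p) + q p * conj (pdt q p))) := by
    simp only [pdt, starRingEnd_apply]
    exact (((Hft.mul Hft.star).const_mul (Complex.I/2)).const_sub
      (Complex.I * k^2)).deriv.trans (by ring)
  rw [e]
  ext i j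
  fin_cases i <;> fin_cases j <;>
    simp only [mpdt, Matrix.of_apply, Fin.zero_eta, Fin.mk_one, Matrix.cons_val',
      Matrix.cons_val_zero, Matrix.cons_val_one, Matrix.head_cons, Matrix.head_fin_const,
      Matrix.empty_val', Matrix.cons_val_fin_one]
  · exact h00
  · exact h01
  · exact h10
  · exact h11

lemma mpdx_Rm {q : ℝ × ℝ → ℂ} (hq : ContDiff ℝ 2 q) (p : ℝ × ℝ) (k : ℂ) :
    mpdx (fun r => Rm q r k) p =
      !![Complex.I*k^2*(pdx q p * conj (q p) + q p * conj (pdx q p))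
           + (1/2 : ℂ)*(q p * conj (pdx (pdx q) p) - conj (q p) * pdx (pdx q) p)
           + (Complex.I/2)*(q p * conj (q p))*(pdx q p * conj (q p) + q p * conj (pdx q p)),
         2*k^3*pdx q p + Complex.I*k*pdx (pdx q) p;
         -(2*k^3*conj (pdx q p)) + Complex.I*k*conj (pdx (pdx q) p),
         -(Complex.I*k^2*(pdx q p * conj (q p) + q p * conj (pdx q p))
           + (1/2 : ℂ)*(q p * conj (pdx (pdx q) p) - conj (q p) * pdx (pdx q) p)
           + (Complex.I/2)*(q p * conj (q p))*(pdx q p * conj (q p) + q p * conj (pdx q p)))] := by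
  have hsx : ContDiff ℝ 2 (fun x => q (x, p.2)) := hq.comp (contDiff_id.prodMk contDiff_const)
  have h2 : ContDiff ℝ (1+1) (fun x => q (x, p.2)) := by norm_num; exact hsx
  have Hfx : HasDerivAt (fun x => q (x, p.2)) (deriv (fun x => q (x, p.2)) p.1) p.1 :=
    ((hsx.differentiable two_ne_zero) p.1).hasDerivAt
  have Hgx : HasDerivAt (deriv (fun x => q (x, p.2)))
      (deriv (deriv (fun x => q (x, p.2))) p.1) p.1 :=
    (((contDiff_succ_iff_deriv.mp h2).2.2.differentiable one_ne_zero) p.1).hasDerivAt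
  have e : (fun r => Rm q r k) = fun r =>
      !![-(2 * Complex.I) * k ^ 4 + Complex.I * k ^ 2 * (q r * conj (q r))
           + (1/2 : ℂ) * (q r * conj (pdx q r) - conj (q r) * pdx q r)
           + (Complex.I / 4) * ((q r * conj (q r)) * (q r * conj (q r))),
         2 * k ^ 3 * q r + Complex.I * k * pdx q r;
         -(2 * k ^ 3 * conj (q r)) + Complex.I * k * conj (pdx q r),
         -(-(2 * Complex.I) * k ^ 4 + Complex.I * k ^ 2 * (q r * conj (q r))
           + (1/2 : ℂ) * (q r * conj (pdx q r) - conj (q r) * pdx q r)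
           + (Complex.I / 4) * ((q r * conj (q r)) * (q r * conj (q r))))] :=
    funext fun r => Rm_eq q r k
  have h00 : pdx (fun r => -(2 * Complex.I) * k ^ 4 + Complex.I * k ^ 2 * (q r * conj (q r))
           + (1/2 : ℂ) * (q r * conj (pdx q r) - conj (q r) * pdx q r)
           + (Complex.I / 4) * ((q r * conj (q r)) * (q r * conj (q r)))) p
      = Complex.I*k^2*(deriv (fun x => q (x, p.2)) p.1 * star (q (p.1, p.2))
            + q (p.1, p.2) * star (deriv (fun x => q (x, p.2)) p.1))
        + (1/2 : ℂ)*(q (p.1, p.2) * star (deriv (deriv (fun x => q (x, p.2))) p.1)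
            - star (q (p.1, p.2)) * deriv (deriv (fun x => q (x, p.2))) p.1)
        + (Complex.I/2)*(q (p.1, p.2) * star (q (p.1, p.2)))
          * (deriv (fun x => q (x, p.2)) p.1 * star (q (p.1, p.2))
             + q (p.1, p.2) * star (deriv (fun x => q (x, p.2)) p.1)) := by
    simp only [pdx, starRingEnd_apply]
    exact (((((Hfx.mul Hfx.star).const_mul (Complex.I*k^2)).const_add (-(2*Complex.I)*k^4)).add
      (((Hfx.mul Hgx.star).sub (Hfx.star.mul Hgx)).const_mul (1/2 : ℂ))).add
      (((Hfx.mul Hfx.star).mul (Hfx.mul Hfx.star)).const_mul (Complex.I/4))).deriv.trans (by simp only [Pi.mul_apply]; ring)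
  have h01 : pdx (fun r => 2 * k ^ 3 * q r + Complex.I * k * pdx q r) p
      = 2*k^3*deriv (fun x => q (x, p.2)) p.1
        + Complex.I*k*deriv (deriv (fun x => q (x, p.2))) p.1 := by
    simp only [pdx]
    exact ((Hfx.const_mul (2*k^3)).add (Hgx.const_mul (Complex.I*k))).deriv.trans (by ring)
  have h10 : pdx (fun r => -(2 * k ^ 3 * conj (q r)) + Complex.I * k * conj (pdx q r)) p
      = -(2*k^3*star (deriv (fun x => q (x, p.2)) p.1))
        + Complex.I*k*star (deriv (deriv (fun x => q (x, p.2))) p.1) := by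
    simp only [pdx, starRingEnd_apply]
    exact (((Hfx.star.const_mul (2*k^3)).neg).add (Hgx.star.const_mul (Complex.I*k))).deriv.trans
      (by ring)
  have h11 : pdx (fun r => -(-(2 * Complex.I) * k ^ 4 + Complex.I * k ^ 2 * (q r * conj (q r))
           + (1/2 : ℂ) * (q r * conj (pdx q r) - conj (q r) * pdx q r)
           + (Complex.I / 4) * ((q r * conj (q r)) * (q r * conj (q r))))) p
      = -(Complex.I*k^2*(deriv (fun x => q (x, p.2)) p.1 * star (q (p.1, p.2))
            + q (p.1, p.2) * star (deriv (fun x => q (x, p.2)) p.1))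
        + (1/2 : ℂ)*(q (p.1, p.2) * star (deriv (deriv (fun x => q (x, p.2))) p.1)
            - star (q (p.1, p.2)) * deriv (deriv (fun x => q (x, p.2))) p.1)
        + (Complex.I/2)*(q (p.1, p.2) * star (q (p.1, p.2)))
          * (deriv (fun x => q (x, p.2)) p.1 * star (q (p.1, p.2))
             + q (p.1, p.2) * star (deriv (fun x => q (x, p.2)) p.1))) := by
    simp only [pdx, starRingEnd_apply]
    exact ((((((Hfx.mul Hfx.star).const_mul (Complex.I*k^2)).const_add (-(2*Complex.I)*k^4)).add
      (((Hfx.mul Hgx.star).sub (Hfx.star.mul Hgx)).const_mul (1/2 : ℂ))).add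
      (((Hfx.mul Hfx.star).mul (Hfx.mul Hfx.star)).const_mul (Complex.I/4))).neg).deriv.trans (by simp only [Pi.mul_apply]; ring)
  rw [e]
  ext i j
  fin_cases i <;> fin_cases j <;>
    simp only [mpdx, Matrix.of_apply, Fin.zero_eta, Fin.mk_one, Matrix.cons_val',
      Matrix.cons_val_zero, Matrix.cons_val_one, Matrix.head_cons, Matrix.head_fin_const,
      Matrix.empty_val', Matrix.cons_val_fin_one]
  · exact h00
  · exact h01
  · exact h10
  · exact h11

def gg (q : ℝ × ℝ → ℂ) (p : ℝ × ℝ) : ℂ :=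
  pdt q p - Complex.I * pdx (pdx q) p - (q p)^2 * conj (pdx q p)
    - (Complex.I/2) * (q p)^3 * (conj (q p))^2

lemma key {q : ℝ × ℝ → ℂ} (hq : ContDiff ℝ 2 q) (p : ℝ × ℝ) (k : ℂ) :
    mpdt (fun r => Pm q r k) p - mpdx (fun r => Rm q r k) p
      + Pm q p k * Rm q p k - Rm q p k * Pm q p k
    = !![(Complex.I/2) * (conj (q p) * gg q p + q p * conj (gg q p)), k * gg q p;
         -(k * conj (gg q p)),
         -((Complex.I/2) * (conj (q p) * gg q p + q p * conj (gg q p)))] := by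
  rw [mpdt_Pm hq, mpdx_Rm hq, Pm_eq, Rm_eq]
  ext i j
  fin_cases i <;> fin_cases j <;>
    simp [Matrix.mul_apply, Fin.sum_univ_two, Matrix.sub_apply, Matrix.add_apply, gg,
      map_sub, _root_.map_mul, map_add, map_pow, map_div₀, Complex.conj_conj, Complex.conj_I,
      _root_.map_one, map_ofNat, Fin.zero_eta, Fin.mk_one] <;>
    (try ring_nf) <;> (try simp only [Complex.I_sq]) <;> (try ring_nf) <;> (try ring)

/-- The Gerdjikov–Ivanov equation. -/
def GI (q : ℝ × ℝ → ℂ) : Prop :=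
  ∀ p : ℝ × ℝ,
    Complex.I * pdt q p + pdx (pdx q) p
      - Complex.I * (q p) ^ 2 * pdx (fun r => conj (q r)) p
      + (1 / 2 : ℂ) * (q p) ^ 3 * (conj (q p)) ^ 2 = 0

/-- The GI equation admits the Lax representation `ψₓ = Pψ, ψₜ = Rψ`:
the zero-curvature equation `∂ₜP − ∂ₓR + PR − RP = 0` holds for all `(x,t)` and all
spectral parameters `k` iff `q` solves the GI equation. -/
theorem gi_lax_representation (q : ℝ × ℝ → ℂ) (hq : ContDiff ℝ 2 q) :
    (∀ (p : ℝ × ℝ) (k : ℂ),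
      mpdt (fun r => Pm q r k) p - mpdx (fun r => Rm q r k) p
        + Pm q p k * Rm q p k - Rm q p k * Pm q p k = 0) ↔ GI q := by
  constructor
  · intro h p
    have hk := h p 1
    rw [key hq p 1] at hk
    have hg : gg q p = 0 := by
      have h2 := congr_fun (congr_fun hk 0) 1
      simpa using h2
    rw [gg] at hg
    rw [pdx_conj q p]
    linear_combination Complex.I * hg + (pdx (pdx q) p + (1/2:ℂ)*(q p)^3*(conj (q p))^2) * Complex.I_sq
  · intro h p k
    rw [key hq p k]
    have hg : gg q p = 0 := by
      have hp := h p
      rw [pdx_conj q p] at hp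
      rw [gg]
      linear_combination (-Complex.I) * hp + (pdt q p - (q p)^2 * conj (pdx q p)) * Complex.I_sq
    rw [hg]
    ext i j
    fin_cases i <;> fin_cases j <;> simp
end
end

section
/- Let k ∈ ℂ with k² ≠ conj(k)², and let y = (y₁,y₂)ᵀ, z ∈ ℂ² satisfy the row-vector equation ⟨y| + (⟨y|y⟩/(k−conj(k)))·⟨z| − (⟨y|σ₃|y⟩/(k+conj(k)))·⟨z|σ₃ = 0. If α⁻¹ := k|y₁|² + conj(k)|y₂|² ≠ 0, then z = ((k²−conj(k)²)/2)·diag(α, conj(α))·y. -/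
open Matrix Complex ComplexConjugate

noncomputable section

abbrev Vec2 := Matrix (Fin 2) (Fin 1) ℂ

/-- ⟨u|v⟩ = u†v -/
def braket (u v : Vec2) : ℂ := (uᴴ * v) 0 0

/-- ⟨u|M|v⟩ = u†Mv -/
def qform (u : Vec2) (M : M2) (v : Vec2) : ℂ := (uᴴ * M * v) 0 0

/-- If `⟨y| + (⟨y|y⟩/(k−k̄))⟨z| − (⟨y|σ₃|y⟩/(k+k̄))⟨z|σ₃ = 0` and
`α⁻¹ = k|y₁|² + k̄|y₂|² ≠ 0`, then `z = ((k²−k̄²)/2)·diag(α,ᾱ)·y`. -/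
theorem z_of_row_equation (k : ℂ) (hk : k ^ 2 ≠ (conj k) ^ 2) (y z : Vec2)
    (hrow : yᴴ + (braket y y / (k - conj k)) • zᴴ
      - (qform y sigma3 y / (k + conj k)) • (zᴴ * sigma3) = 0)
    (α : ℂ)
    (hα : α⁻¹ = k * (Complex.normSq (y 0 0) : ℂ) + conj k * (Complex.normSq (y 1 0) : ℂ))
    (hne : k * (Complex.normSq (y 0 0) : ℂ) + conj k * (Complex.normSq (y 1 0) : ℂ) ≠ 0) :
    z = ((k ^ 2 - (conj k) ^ 2) / 2) • (!![α, 0; 0, conj α] * y) := by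
  have hd : k - conj k ≠ 0 := by
    intro h; apply hk; linear_combination (k + conj k) * h
  have hs : k + conj k ≠ 0 := by
    intro h; apply hk; linear_combination (k - conj k) * h
  have hαne : α ≠ 0 := by
    intro h; rw [h] at hα; simp at hα; exact hne hα.symm
  have hαmul : α * (k * (Complex.normSq (y 0 0) : ℂ) + conj k * (Complex.normSq (y 1 0) : ℂ)) = 1 := by
    rw [← hα]; exact mul_inv_cancel₀ hαne
  have hcαmul : conj α * (conj k * (Complex.normSq (y 0 0) : ℂ) + k * (Complex.normSq (y 1 0) : ℂ)) = 1 := by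
    have := congrArg conj hαmul
    simpa [_root_.map_mul, map_add, Complex.conj_conj] using this
  have e0 := congrFun (congrFun hrow 0) 0
  have e1 := congrFun (congrFun hrow 0) 1
  simp [braket, qform, sigma3, Matrix.mul_apply, Fin.sum_univ_two, Matrix.conjTranspose_apply,
    Matrix.add_apply, Matrix.sub_apply, Matrix.smul_apply, Matrix.zero_apply, smul_eq_mul] at e0 e1
  ext i j
  fin_cases i <;> fin_cases j
  · simp [Matrix.mul_apply, Matrix.vecMul, dotProduct, Fin.sum_univ_two, Matrix.smul_apply, smul_eq_mul]
    rw [Complex.normSq_eq_conj_mul_self, Complex.normSq_eq_conj_mul_self] at hcαmul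
    refine (starRingEnd ℂ).injective ?_
    simp only [_root_.map_mul, map_div₀, map_sub, map_pow, Complex.conj_conj, map_ofNat]
    field_simp [hd, hs] at e0 ⊢
    linear_combination (starRingEnd ℂ) α * e0 - 2 * (starRingEnd ℂ) (z 0 0) * hcαmul
  · simp [Matrix.mul_apply, Matrix.vecMul, dotProduct, Fin.sum_univ_two, Matrix.smul_apply, smul_eq_mul]
    rw [Complex.normSq_eq_conj_mul_self, Complex.normSq_eq_conj_mul_self] at hαmul
    refine (starRingEnd ℂ).injective ?_
    simp only [_root_.map_mul, map_div₀, map_sub, map_pow, Complex.conj_conj, map_ofNat]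
    field_simp [hd, hs] at e1 ⊢
    linear_combination α * e1 - 2 * (starRingEnd ℂ) (z 1 0) * hαmul
end
end
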